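/- Let T₂^high = [−π/2, 3π/2)² \ [−π/2, π/2)². Define μ(ω) = sup_{(θ₁,θ₂) ∈ T₂^high} |1 − ω · (1/60)((cos θ₁ + cos θ₂ + 4)² + (cos θ₁ + cos θ₂)² + 16)(2 − cos θ₁ − cos θ₂)| for ω ∈ ℝ. Then μ(20/23) = 9/23, and μ(ω) > 9/23 for every real ω ≠ 20/23. In other words, the optimal smoothing factor of the vertex-wise additive Vanka relaxation for the 2D Laplacian is 9/23, uniquely achieved at ω = 20/23. -/

import Mathlib

open Real

def T2high : Set (ℝ × ℝ) :=
  (Set.Ico (-(π / 2)) (3 * π / 2) ×ˢ Set.Ico (-(π / 2)) (3 * π / 2)) \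
    (Set.Ico (-(π / 2)) (π / 2) ×ˢ Set.Ico (-(π / 2)) (π / 2))

noncomputable def muV2 (ω : ℝ) : ℝ :=
  sSup ((fun θ : ℝ × ℝ =>
    |1 - ω * ((1 / 60) * ((cos θ.1 + cos θ.2 + 4) ^ 2 + (cos θ.1 + cos θ.2) ^ 2 + 16) *
      (2 - cos θ.1 - cos θ.2))|) '' T2high)

lemma cos_hi_nonpos {x : ℝ} (h1 : x ∈ Set.Ico (-(π/2)) (3*π/2))
    (h2 : x ∉ Set.Ico (-(π/2)) (π/2)) : Real.cos x ≤ 0 := by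
  have hx : π/2 ≤ x := by
    by_contra h
    exact h2 ⟨h1.1, lt_of_not_ge h⟩
  exact Real.cos_nonpos_of_pi_div_two_le_of_le hx (by linarith [h1.2])

lemma csum_mem {θ : ℝ × ℝ} (h : θ ∈ T2high) :
    -2 ≤ Real.cos θ.1 + Real.cos θ.2 ∧ Real.cos θ.1 + Real.cos θ.2 ≤ 1 := by
  obtain ⟨hb, hn⟩ := h
  have h1 : θ.1 ∈ Set.Ico (-(π/2)) (3*π/2) := hb.1
  have h2 : θ.2 ∈ Set.Ico (-(π/2)) (3*π/2) := hb.2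
  have hc1 := Real.neg_one_le_cos θ.1
  have hc2 := Real.neg_one_le_cos θ.2
  have hd1 := Real.cos_le_one θ.1
  have hd2 := Real.cos_le_one θ.2
  refine ⟨by linarith, ?_⟩
  have hor : θ.1 ∉ Set.Ico (-(π/2)) (π/2) ∨ θ.2 ∉ Set.Ico (-(π/2)) (π/2) := by
    by_contra hcon
    push_neg at hcon
    exact hn ⟨hcon.1, hcon.2⟩
  rcases hor with h' | h'
  · linarith [cos_hi_nonpos h1 h']
  · linarith [cos_hi_nonpos h2 h']

lemma f_bounds {c : ℝ} (h1 : -2 ≤ c) (h2 : c ≤ 1) :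
    7/10 ≤ (1/60) * ((c + 4)^2 + c^2 + 16) * (2 - c) ∧
    (1/60) * ((c + 4)^2 + c^2 + 16) * (2 - c) ≤ 8/5 := by
  constructor
  · nlinarith [mul_nonneg (by linarith : (0:ℝ) ≤ 1 - c)
      (by nlinarith : (0:ℝ) ≤ 2*c^2 + 6*c + 22)]
  · nlinarith [mul_nonneg (by linarith : (0:ℝ) ≤ c + 2)
      (by positivity : (0:ℝ) ≤ c^2 + 8)]

lemma mem_half : ((π/2, 0) : ℝ × ℝ) ∈ T2high := by
  have hπ := Real.pi_pos
  constructor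
  · exact ⟨⟨by linarith, by linarith⟩, ⟨by linarith, by linarith⟩⟩
  · intro h
    exact absurd h.1.2 (lt_irrefl _)

lemma mem_pi : ((π, π) : ℝ × ℝ) ∈ T2high := by
  have hπ := Real.pi_pos
  constructor
  · exact ⟨⟨by linarith, by linarith⟩, ⟨by linarith, by linarith⟩⟩
  · intro h
    have := h.1.2
    simp at this
    linarith

lemma muV2_bddAbove (ω : ℝ) : BddAbove ((fun θ : ℝ × ℝ =>
    |1 - ω * ((1 / 60) * ((cos θ.1 + cos θ.2 + 4) ^ 2 + (cos θ.1 + cos θ.2) ^ 2 + 16) *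
      (2 - cos θ.1 - cos θ.2))|) '' T2high) := by
  refine ⟨1 + |ω| * (8/5), ?_⟩
  rintro y ⟨θ, hθ, rfl⟩
  obtain ⟨hl, hr⟩ := csum_mem hθ
  obtain ⟨hf1, hf2⟩ := f_bounds hl hr
  set f := (1/60) * ((cos θ.1 + cos θ.2 + 4)^2 + (cos θ.1 + cos θ.2)^2 + 16) *
    (2 - cos θ.1 - cos θ.2) with hfdef
  have hfe : (1 / 60) * ((cos θ.1 + cos θ.2 + 4) ^ 2 + (cos θ.1 + cos θ.2) ^ 2 + 16) *
      (2 - cos θ.1 - cos θ.2) = f := by rw [hfdef]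
  calc |1 - ω * ((1 / 60) * ((cos θ.1 + cos θ.2 + 4) ^ 2 + (cos θ.1 + cos θ.2) ^ 2 + 16) *
      (2 - cos θ.1 - cos θ.2))| ≤ |(1:ℝ)| + |ω * f| := by rw [hfe]; exact abs_sub _ _
    _ ≤ 1 + |ω| * (8/5) := by
        rw [abs_one, abs_mul]
        have : |f| ≤ 8/5 := by
          rw [abs_le]
          have hf : 7/10 ≤ f := by nlinarith
          have hf' : f ≤ 8/5 := by nlinarith
          exact ⟨by linarith, hf'⟩
        nlinarith [abs_nonneg ω]

theorem stmt_10 :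
    muV2 (20 / 23) = 9 / 23 ∧ ∀ ω : ℝ, ω ≠ 20 / 23 → 9 / 23 < muV2 ω := by
  have hmem_half : ∀ ω : ℝ, |1 - ω * (7/10)| ∈ ((fun θ : ℝ × ℝ =>
      |1 - ω * ((1 / 60) * ((cos θ.1 + cos θ.2 + 4) ^ 2 + (cos θ.1 + cos θ.2) ^ 2 + 16) *
        (2 - cos θ.1 - cos θ.2))|) '' T2high) := by
    intro ω
    refine ⟨((π/2, 0) : ℝ × ℝ), mem_half, ?_⟩
    simp [Real.cos_pi_div_two, Real.cos_zero]
    norm_num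
  have hmem_pi : ∀ ω : ℝ, |1 - ω * (8/5)| ∈ ((fun θ : ℝ × ℝ =>
      |1 - ω * ((1 / 60) * ((cos θ.1 + cos θ.2 + 4) ^ 2 + (cos θ.1 + cos θ.2) ^ 2 + 16) *
        (2 - cos θ.1 - cos θ.2))|) '' T2high) := by
    intro ω
    refine ⟨((π, π) : ℝ × ℝ), mem_pi, ?_⟩
    simp [Real.cos_pi]
    norm_num
  constructor
  · apply le_antisymm
    · apply csSup_le
      · exact ⟨_, hmem_half (20/23)⟩
      · rintro y ⟨θ, hθ, rfl⟩
        obtain ⟨hl, hr⟩ := csum_mem hθ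
        obtain ⟨hf1, hf2⟩ := f_bounds hl hr
        rw [abs_le]
        constructor <;> nlinarith
    · have h := le_csSup (muV2_bddAbove (20/23)) (hmem_half (20/23))
      have he : |1 - (20/23 : ℝ) * (7/10)| = 9/23 := by rw [abs_of_nonneg] <;> norm_num
      rw [he] at h
      exact h
  · intro ω hω
    rcases lt_or_gt_of_ne hω with h | h
    · have hle := le_csSup (muV2_bddAbove ω) (hmem_half ω)
      have h9 : (9:ℝ)/23 < |1 - ω * (7/10)| := by
        calc (9:ℝ)/23 < 1 - ω * (7/10) := by linarith
          _ ≤ |1 - ω * (7/10)| := le_abs_self _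
      exact lt_of_lt_of_le h9 hle
    · have hle := le_csSup (muV2_bddAbove ω) (hmem_pi ω)
      have h9 : (9:ℝ)/23 < |1 - ω * (8/5)| := by
        calc (9:ℝ)/23 < ω * (8/5) - 1 := by linarith
          _ = -(1 - ω * (8/5)) := by ring
          _ ≤ |1 - ω * (8/5)| := neg_le_abs _
      exact lt_of_lt_of_le h9 hle
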